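/- Let k ≥ 1 and n = 5(2k+1). Then the matrix Z_n is skew-symmetric, each of its rows sums to zero, and for every i ∈ {0,…,n−1} the edge {i, (i+1) mod n} is smoothable for Z_n; in particular Z_n has a full smoothable cycle. -/
import Mathlib


open BigOperators Matrix

/-- The edge `{i,j}` is *smoothable* for the skew-symmetric matrix `B`:
`B i j ≠ 0` and for every `k ∉ {i,j}` the quotient `(B j k + B k i) / B i j`
is a non-negative integer. -/
def IsSmoothable {n : ℕ} (B : Matrix (Fin n) (Fin n) ℂ) (i j : Fin n) : Prop :=
  B i j ≠ 0 ∧ ∀ k : Fin n, k ≠ i → k ≠ j → ∃ m : ℕ, (B j k + B k i) / B i j = (m : ℂ)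

/-- `B` has a *full smoothable cycle*: there is a permutation `σ` of `{0,…,n−1}`
such that every edge `{σ(i), σ((i+1) mod n)}` is smoothable for `B`. -/
def HasFullSmoothableCycle {n : ℕ} (B : Matrix (Fin n) (Fin n) ℂ) : Prop :=
  ∃ σ : Equiv.Perm (Fin n), ∀ i : Fin n,
    IsSmoothable B (σ i)
      (σ ⟨(i.val + 1) % n, Nat.mod_lt _ (Nat.lt_of_le_of_lt (Nat.zero_le _) i.isLt)⟩)

/-- Rows `r_0,…,r_4` of `Z_n`:
`r_0 = (0, 1^{(n−1)/2}, (−1)^{(n−1)/2})`,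
`r_1 = (−1, 0, 2, 2, 1^{(n−7)/2}, (−1)^{(n−1)/2})`,
`r_2 = (−1, −2, 0, 2, 1^{(n−3)/2}, (−1)^{(n−5)/2})`,
`r_3 = (−1, −2, −2, 0, 1^{(n+1)/2}, (−1)^{(n−9)/2})`,
`r_4 = (−1, −1, −1, −1, 0, 1^{(n−1)/2}, (−1)^{(n−9)/2})`. -/
def zRow (n s t : ℕ) : ℂ :=
  match s with
  | 0 => if t = 0 then 0 else if t ≤ (n - 1) / 2 then 1 else -1
  | 1 => if t = 0 then -1 else if t = 1 then 0 else if t ≤ 3 then 2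
         else if t ≤ (n - 1) / 2 then 1 else -1
  | 2 => if t = 0 then -1 else if t = 1 then -2 else if t = 2 then 0 else if t = 3 then 2
         else if t ≤ (n + 3) / 2 then 1 else -1
  | 3 => if t = 0 then -1 else if t ≤ 2 then -2 else if t = 3 then 0
         else if t ≤ (n + 7) / 2 then 1 else -1
  | _ => if t ≤ 3 then -1 else if t = 4 then 0 else if t ≤ (n + 7) / 2 then 1 else -1

/-- The matrix `Z_n` (for `n = 5(2k+1)`): rows `r_0,…,r_4` as above and
`r_i = T⁵(r_{i−5})` for `5 ≤ i ≤ n−1`. -/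
def Zmat (n : ℕ) : Matrix (Fin n) (Fin n) ℂ :=
  Matrix.of fun i j => zRow n (i.val % 5) ((j.val + n - (i.val - i.val % 5)) % n)

lemma modfacts (x n : ℕ) (hn : 0 < n) (hx : x < 2*n) :
    ∃ y, x % n = y ∧ y < n ∧ (y = x ∨ y + n = x) := by
  refine ⟨x % n, rfl, Nat.mod_lt _ hn, ?_⟩
  rcases Nat.lt_or_ge x n with h | h
  · exact Or.inl (Nat.mod_eq_of_lt h)
  · right; rw [Nat.mod_eq_sub_mod h, Nat.mod_eq_of_lt (by omega)]; omega

set_option maxHeartbeats 4000000 in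
lemma coreSkew (k n s u t1 t2 : ℕ) (hn : n = 10*k+5) (hk : 1 ≤ k)
    (hs : s < 5) (hu : u < 5) (h1 : t1 < n) (h2 : t2 < n)
    (m1 : t1 % 5 = u) (m2 : t2 % 5 = s)
    (hsum : t1 + t2 = s + u ∨ t1 + t2 = n + s + u) :
    zRow n s t1 = -zRow n u t2 := by
  subst hn
  interval_cases s <;> interval_cases u <;>
    simp only [zRow] <;> split_ifs <;>
    first
      | (exact ‹False›.elim)
      | (exfalso; omega)
      | (norm_num; done)


set_option maxHeartbeats 4000000 in
lemma coreC (k n s s' e t1 t2 : ℕ) (hn : n = 10*k+5) (hk : 1 ≤ k)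
    (hs : s < 5) (hs' : s' = (s+1) % 5) (he : 2 ≤ e) (he' : e < n)
    (h1 : t1 < n) (h2 : t2 < n)
    (H1 : t1 = s' + (e-1) ∨ t1 + n = s' + (e-1))
    (H2 : t2 = s + e ∨ t2 + n = s + e) :
    ∃ m : ℕ, zRow n s' t1 - zRow n s t2 = (m : ℂ) * zRow n s (s+1) := by
  subst hn
  interval_cases s <;> (norm_num at hs'; subst hs') <;>
    simp only [zRow] <;> split_ifs <;>
    first
      | (exact ‹False›.elim)
      | (exfalso; omega)
      | (refine ⟨0, ?_⟩; norm_num; done)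
      | (refine ⟨1, ?_⟩; norm_num; done)
      | (refine ⟨2, ?_⟩; norm_num; done)


lemma sum_const_Ico (f : ℕ → ℂ) (a b L : ℕ) (c : ℂ) (hL : a + L = b)
    (h : ∀ t, a ≤ t → t < b → f t = c) :
    ∑ t ∈ Finset.Ico a b, f t = (L : ℕ) * c := by
  rw [Finset.sum_congr rfl fun t ht => h t (Finset.mem_Ico.mp ht).1 (Finset.mem_Ico.mp ht).2,
    Finset.sum_const, Nat.card_Ico, nsmul_eq_mul]
  have : b - a = L := by omega
  rw [this]

set_option maxHeartbeats 4000000 in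
lemma rowSum (k n s : ℕ) (hn : n = 10*k+5) (hk : 1 ≤ k) (hs : s < 5) :
    ∑ t ∈ Finset.range n, zRow n s t = 0 := by
  obtain ⟨k', rfl⟩ : ∃ k', k = k' + 1 := ⟨k - 1, by omega⟩
  subst hn
  rw [Finset.range_eq_Ico,
    ← Finset.sum_Ico_consecutive _ (by omega : 0 ≤ 5*(k'+1)+7) (by omega : 5*(k'+1)+7 ≤ 10*(k'+1)+5),
    ← Finset.sum_Ico_consecutive _ (by omega : 0 ≤ 5*(k'+1)+5) (by omega : 5*(k'+1)+5 ≤ 5*(k'+1)+7),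
    ← Finset.sum_Ico_consecutive _ (by omega : 0 ≤ 5*(k'+1)+3) (by omega : 5*(k'+1)+3 ≤ 5*(k'+1)+5),
    ← Finset.sum_Ico_consecutive _ (by omega : 0 ≤ 5) (by omega : 5 ≤ 5*(k'+1)+3),
    ← Finset.sum_Ico_consecutive _ (by omega : 0 ≤ 4) (by omega : 4 ≤ 5),
    ← Finset.sum_Ico_consecutive _ (by omega : 0 ≤ 3) (by omega : 3 ≤ 4),
    ← Finset.sum_Ico_consecutive _ (by omega : 0 ≤ 2) (by omega : 2 ≤ 3),
    ← Finset.sum_Ico_consecutive _ (by omega : 0 ≤ 1) (by omega : 1 ≤ 2)]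
  interval_cases s <;>
  · rw [sum_const_Ico _ _ _ 1 _ (by omega) (fun t u v => by
        simp only [zRow] ; split_ifs <;> first | (exact ‹False›.elim) | (exfalso; omega) | (norm_num; done) | rfl),
      sum_const_Ico _ _ _ 1 _ (by omega) (fun t u v => by
        simp only [zRow] ; split_ifs <;> first | (exact ‹False›.elim) | (exfalso; omega) | (norm_num; done) | rfl),
      sum_const_Ico _ _ _ 1 _ (by omega) (fun t u v => by
        simp only [zRow] ; split_ifs <;> first | (exact ‹False›.elim) | (exfalso; omega) | (norm_num; done) | rfl),
      sum_const_Ico _ _ _ 1 _ (by omega) (fun t u v => by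
        simp only [zRow] ; split_ifs <;> first | (exact ‹False›.elim) | (exfalso; omega) | (norm_num; done) | rfl),
      sum_const_Ico _ _ _ 1 _ (by omega) (fun t u v => by
        simp only [zRow] ; split_ifs <;> first | (exact ‹False›.elim) | (exfalso; omega) | (norm_num; done) | rfl),
      sum_const_Ico _ _ _ (5*k'+3) _ (by omega) (fun t u v => by
        simp only [zRow] ; split_ifs <;> first | (exact ‹False›.elim) | (exfalso; omega) | (norm_num; done) | rfl),
      sum_const_Ico _ _ _ 2 _ (by omega) (fun t u v => by
        simp only [zRow] ; split_ifs <;> first | (exact ‹False›.elim) | (exfalso; omega) | (norm_num; done) | rfl),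
      sum_const_Ico _ _ _ 2 _ (by omega) (fun t u v => by
        simp only [zRow] ; split_ifs <;> first | (exact ‹False›.elim) | (exfalso; omega) | (norm_num; done) | rfl),
      sum_const_Ico _ _ _ (5*k'+3) _ (by omega) (fun t u v => by
        simp only [zRow] ; split_ifs <;> first | (exact ‹False›.elim) | (exfalso; omega) | (norm_num; done) | rfl)]
    push_cast
    ring


lemma dvd5 (k n : ℕ) (hn : n = 10*k+5) : (5:ℕ) ∣ n := ⟨2*k+1, by omega⟩

set_option maxHeartbeats 4000000 in
lemma skewPart (k n : ℕ) (hk : 1 ≤ k) (hn : n = 10*k+5) (i j : Fin n) :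
    Zmat n j i = -Zmat n i j := by
  have hi : i.val < n := i.isLt
  have hj : j.val < n := j.isLt
  show zRow n (j.val % 5) ((i.val + n - (j.val - j.val % 5)) % n)
      = -zRow n (i.val % 5) ((j.val + n - (i.val - i.val % 5)) % n)
  obtain ⟨t1, e1, l1, d1⟩ := modfacts (i.val + n - (j.val - j.val % 5)) n (by omega) (by omega)
  obtain ⟨t2, e2, l2, d2⟩ := modfacts (j.val + n - (i.val - i.val % 5)) n (by omega) (by omega)
  have m1 : t1 % 5 = i.val % 5 := by
    rw [← e1, Nat.mod_mod_of_dvd _ (dvd5 k n hn)]; omega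
  have m2 : t2 % 5 = j.val % 5 := by
    rw [← e2, Nat.mod_mod_of_dvd _ (dvd5 k n hn)]; omega
  rw [e1, e2]
  exact coreSkew k n (j.val % 5) (i.val % 5) t1 t2 hn hk (by omega) (by omega) l1 l2
    m1 m2 (by omega)

set_option maxHeartbeats 4000000 in
lemma rowPart (k n : ℕ) (hk : 1 ≤ k) (hn : n = 10*k+5) (i : Fin n) :
    ∑ j, Zmat n i j = 0 := by
  have hn0 : 0 < n := by omega
  have hi : i.val < n := i.isLt
  have hs5 : i.val % 5 < 5 := Nat.mod_lt _ (by omega)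
  have key : ∑ x : Fin n, zRow n (i.val % 5) x.val = ∑ j, Zmat n i j := by
    haveI : NeZero n := ⟨by omega⟩
    refine Fintype.sum_equiv (Equiv.addRight (⟨i.val - i.val % 5, by omega⟩ : Fin n)) _ _ ?_
    intro x
    show zRow n (i.val % 5) x.val
        = zRow n (i.val % 5) (((x + (⟨i.val - i.val % 5, by omega⟩ : Fin n)).val
            + n - (i.val - i.val % 5)) % n)
    rw [Fin.val_add]
    obtain ⟨y, ey, ly, dy⟩ := modfacts (x.val + (i.val - i.val % 5)) n hn0
      (by have := x.isLt; omega)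
    rw [ey]
    obtain ⟨z, ez, lz, dz⟩ := modfacts (y + n - (i.val - i.val % 5)) n hn0 (by omega)
    rw [ez]
    congr 1
    have := x.isLt
    omega
  rw [← key, Fin.sum_univ_eq_sum_range (fun t => zRow n (i.val % 5) t) n,
    rowSum k n (i.val % 5) hn hk hs5]

set_option maxHeartbeats 4000000 in
lemma zrow_bne (k n s : ℕ) (hn : n = 10*k+5) (hk : 1 ≤ k) (hs : s < 5) :
    zRow n s (s+1) ≠ 0 := by
  subst hn
  interval_cases s <;> simp only [zRow] <;> split_ifs <;>
    first | (exact ‹False›.elim) | (norm_num; done) | (exfalso; omega)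

set_option maxHeartbeats 4000000 in
lemma smooth' (k n : ℕ) (hk : 1 ≤ k) (hn : n = 10*k+5) (i j : Fin n)
    (hj : j.val = (i.val + 1) % n) : IsSmoothable (Zmat n) i j := by
  have hn0 : 0 < n := by omega
  have hi : i.val < n := i.isLt
  have hjlt : j.val < n := j.isLt
  obtain ⟨jv, ejv, ljv, djv⟩ := modfacts (i.val + 1) n hn0 (by omega)
  rw [ejv] at hj
  have hb : Zmat n i j = zRow n (i.val % 5) (i.val % 5 + 1) := by
    show zRow n (i.val % 5) ((j.val + n - (i.val - i.val % 5)) % n) = _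
    obtain ⟨t, et, lt', dt⟩ := modfacts (j.val + n - (i.val - i.val % 5)) n hn0 (by omega)
    rw [et]
    congr 1
    omega
  have hbne := zrow_bne k n (i.val % 5) hn hk (Nat.mod_lt _ (by omega))
  constructor
  · rw [hb]; exact hbne
  · intro k' hki hkj
    have hkc : k'.val < n := k'.isLt
    have hca : k'.val ≠ i.val := fun h => hki (Fin.ext h)
    have hcj : k'.val ≠ j.val := fun h => hkj (Fin.ext h)
    obtain ⟨e, ee, le, de⟩ := modfacts (k'.val + n - i.val) n hn0 (by omega)
    obtain ⟨t1, e1, l1, d1⟩ := modfacts (k'.val + n - (j.val - j.val % 5)) n hn0 (by omega)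
    obtain ⟨t2, e2, l2, d2⟩ := modfacts (k'.val + n - (i.val - i.val % 5)) n hn0 (by omega)
    obtain ⟨m, hm⟩ := coreC k n (i.val % 5) (j.val % 5) e t1 t2 hn hk
      (Nat.mod_lt _ (by omega)) (by omega) (by omega) le l1 l2 (by omega) (by omega)
    refine ⟨m, ?_⟩
    have hBjk : Zmat n j k' = zRow n (j.val % 5) t1 := by
      show zRow n (j.val % 5) ((k'.val + n - (j.val - j.val % 5)) % n) = _
      rw [e1]
    have hBik : Zmat n i k' = zRow n (i.val % 5) t2 := by
      show zRow n (i.val % 5) ((k'.val + n - (i.val - i.val % 5)) % n) = _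
      rw [e2]
    rw [skewPart k n hk hn i k', hBjk, hBik, hb, ← sub_eq_add_neg, hm,
      mul_div_cancel_right₀ _ hbne]


/-- For `k ≥ 1` and `n = 5(2k+1)`, the matrix `Z_n` is
skew-symmetric, its rows sum to zero, every edge `{i, (i+1) mod n}` is smoothable
for it, and it has a full smoothable cycle. -/
theorem Zmat_has_full_smoothable_cycle (k n : ℕ) (hk : 1 ≤ k)
    (hn : n = 5 * (2 * k + 1)) :
    (∀ i j, Zmat n j i = -Zmat n i j) ∧
    (∀ i, ∑ j, Zmat n i j = 0) ∧
    (∀ i : Fin n,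
      IsSmoothable (Zmat n) i ⟨(i.val + 1) % n, Nat.mod_lt _ (by omega)⟩) ∧
    HasFullSmoothableCycle (Zmat n) := by
  have hn' : n = 10*k+5 := by omega
  refine ⟨fun i j => skewPart k n hk hn' i j, fun i => rowPart k n hk hn' i,
    fun i => smooth' k n hk hn' i _ rfl, ⟨Equiv.refl _, fun i => ?_⟩⟩
  exact smooth' k n hk hn' i _ rfl
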